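/- The number of 2×2 matrices A over F_p (p an odd prime) such that A = B² for some 2×2 matrix B over F_p is (3/8)p⁴ + O(p³). -/

import Mathlib

set_option linter.unusedSectionVars false
set_option maxHeartbeats 1000000
set_option linter.unusedVariables false
open Matrix Finset
section Aux
variable {K : Type*} [Field K] [Fintype K] [DecidableEq K]
  [DecidablePred (IsSquare : K → Prop)]

lemma ch2 (A : Matrix (Fin 2) (Fin 2) K) :
    A * A = (Matrix.trace A) • A - (A.det) • 1 := by
  ext i j
  fin_cases i <;> fin_cases j <;>
    simp [Matrix.mul_apply, Fin.sum_univ_two, Matrix.trace_fin_two, Matrix.det_fin_two,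
      Matrix.one_apply] <;> ring

lemma sq_of_cond (A : Matrix (Fin 2) (Fin 2) K) (u v : K)
    (h1 : u^2 * Matrix.trace A + 2*u*v = 1) (h2 : v^2 = u^2 * A.det) :
    ∃ B, B * B = A := by
  refine ⟨u • A + v • 1, ?_⟩
  have hT : Matrix.trace A = A 0 0 + A 1 1 := Matrix.trace_fin_two A
  have hD : A.det = A 0 0 * A 1 1 - A 0 1 * A 1 0 := Matrix.det_fin_two A
  rw [hT] at h1; rw [hD] at h2
  ext i j
  fin_cases i <;> fin_cases j <;>
    simp [Matrix.mul_apply, Fin.sum_univ_two, Matrix.one_apply] <;>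
    [skip; skip; skip; skip]
  · linear_combination A 0 0 * h1 + h2
  · linear_combination A 0 1 * h1
  · linear_combination A 1 0 * h1
  · linear_combination A 1 1 * h1 + h2

lemma sq_iff (h2K : (2:K) ≠ 0) (A : Matrix (Fin 2) (Fin 2) K)
    (hΔ : (Matrix.trace A)^2 - 4 * A.det ≠ 0) :
    (∃ B, B * B = A) ↔
      ∃ s : K, s^2 = A.det ∧
        ((Matrix.trace A + 2*s ≠ 0 ∧ IsSquare (Matrix.trace A + 2*s)) ∨
         (Matrix.trace A - 2*s ≠ 0 ∧ IsSquare (Matrix.trace A - 2*s))) := by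
  constructor
  · rintro ⟨B, rfl⟩
    set t := Matrix.trace B with ht
    set d := B.det with hd
    have hBB : B * B = t • B - d • 1 := ch2 B
    have hTr : Matrix.trace (B * B) = t^2 - 2*d := by
      rw [hBB]; simp [Matrix.trace_sub, Matrix.trace_smul, Matrix.trace_one]; ring
    have hDet : (B * B).det = d^2 := by rw [Matrix.det_mul]; ring
    have ht0 : t ≠ 0 := by
      intro h0
      rw [hTr, hDet, h0] at hΔ
      apply hΔ; ring
    refine ⟨d, by rw [hDet], Or.inl ⟨?_, ?_⟩⟩
    · rw [hTr]; intro h; apply ht0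
      have : t^2 = 0 := by linear_combination h
      exact pow_eq_zero_iff (by norm_num) |>.mp this
    · rw [hTr]
      have : t^2 - 2*d + 2*d = t*t := by ring
      exact ⟨t, by linear_combination this⟩
  · rintro ⟨s, hs, hor⟩
    rcases hor with ⟨hx0, t, htx⟩ | ⟨hx0, t, htx⟩
    · have ht0 : t ≠ 0 := by rintro rfl; simp at htx; exact hx0 htx
      have key : t⁻¹ * t = 1 := inv_mul_cancel₀ ht0
      refine sq_of_cond A t⁻¹ (t⁻¹ * s) ?_ ?_
      · linear_combination t⁻¹^2 * htx + (t⁻¹*t + 1) * key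
      · linear_combination t⁻¹^2 * hs
    · have ht0 : t ≠ 0 := by rintro rfl; simp at htx; exact hx0 htx
      have key : t⁻¹ * t = 1 := inv_mul_cancel₀ ht0
      refine sq_of_cond A t⁻¹ (t⁻¹ * (-s)) ?_ ?_
      · linear_combination t⁻¹^2 * htx + (t⁻¹*t + 1) * key
      · linear_combination t⁻¹^2 * hs

lemma nz_card : (univ.filter fun x : K => x ≠ 0).card + 1 = Fintype.card K := by
  have h := Finset.card_filter_add_card_filter_not (s := (univ : Finset K))
    (p := fun x : K => x ≠ 0)
  rw [Finset.card_univ] at h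
  rw [← h]
  congr 1
  have : (univ.filter fun x : K => ¬ x ≠ 0) = {0} := by ext x; simp
  rw [this, Finset.card_singleton]

lemma hyper_card_eq {k : K} (hk : k ≠ 0) :
    (univ.filter fun bc : K × K => bc.1 * bc.2 = k).card + 1 = Fintype.card K := by
  rw [← nz_card]
  congr 1
  apply Finset.card_nbij' (i := fun bc => bc.1) (j := fun b => (b, b⁻¹ * k))
  · intro a ha
    simp only [Finset.mem_coe, mem_filter, mem_univ, true_and] at ha ⊢
    intro h0; rw [h0, zero_mul] at ha; exact hk ha.symm
  · intro b hb
    simp only [Finset.mem_coe, mem_filter, mem_univ, true_and] at hb ⊢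
    field_simp
  · intro a ha
    simp only [Finset.mem_coe, mem_filter, mem_univ, true_and] at ha
    have h1 : a.1 ≠ 0 := by rintro h; rw [h, zero_mul] at ha; exact hk ha.symm
    have : a.1⁻¹ * k = a.2 := by rw [← ha]; field_simp
    simp [this]
  · intro b hb; simp

lemma hyper_card_le (k : K) :
    (univ.filter fun bc : K × K => bc.1 * bc.2 = k).card ≤ 2 * Fintype.card K := by
  rcases eq_or_ne k 0 with rfl | hk
  · calc (univ.filter fun bc : K × K => bc.1 * bc.2 = 0).card
        ≤ (({0} ×ˢ univ : Finset (K × K)) ∪ (univ ×ˢ {0})).card := by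
          apply Finset.card_le_card
          intro bc hbc
          simp only [mem_filter, mem_univ, true_and] at hbc
          rw [Finset.mem_union]
          rcases mul_eq_zero.mp hbc with h | h
          · exact Or.inl (by simp only [Finset.mem_product, Finset.mem_singleton, mem_univ, and_true]; exact h)
          · exact Or.inr (by simp only [Finset.mem_product, Finset.mem_singleton, mem_univ, true_and]; exact h)
      _ ≤ _ := by
          refine (Finset.card_union_le _ _).trans ?_
          simp [Finset.card_product, two_mul]
  · have := hyper_card_eq hk
    have := Fintype.card_pos (α := K)
    omega

lemma hyper_card_ge (k : K) :
    Fintype.card K ≤ (univ.filter fun bc : K × K => bc.1 * bc.2 = k).card + 1 := by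
  rw [← nz_card]
  have : ((univ.filter fun x : K => x ≠ 0) : Finset K).card ≤
      (univ.filter fun bc : K × K => bc.1 * bc.2 = k).card := by
    apply Finset.card_le_card_of_injOn (fun b => (b, b⁻¹ * k))
    · intro b hb
      simp only [Finset.mem_coe, mem_filter, mem_univ, true_and] at hb ⊢
      field_simp
    · intro a _ b _ h
      exact (Prod.mk.injEq _ _ _ _).mp h |>.1
  omega

lemma root_bound (T D : K) : (univ.filter fun a : K => a * (T - a) - D = 0).card ≤ 2 := by
  rcases (univ.filter fun a : K => a * (T - a) - D = 0).eq_empty_or_nonempty with h | ⟨a₀, ha₀⟩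
  · simp [h]
  · have : (univ.filter fun a : K => a * (T - a) - D = 0) ⊆ {a₀, T - a₀} := by
      intro a ha
      simp only [mem_filter, mem_univ, true_and] at ha ha₀
      simp only [Finset.mem_insert, Finset.mem_singleton]
      have : (a - a₀) * (T - a - a₀) = 0 := by linear_combination ha - ha₀
      rcases mul_eq_zero.mp this with h | h
      · left; linear_combination h
      · right; linear_combination -h
    refine (Finset.card_le_card this).trans ?_
    exact (Finset.card_insert_le _ _).trans (by simp)

lemma fiber_eq_V (T D : K) :
    (univ.filter fun A : Matrix (Fin 2) (Fin 2) K => Matrix.trace A = T ∧ A.det = D).card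
      = (univ.filter fun x : K × K × K => x.2.1 * x.2.2 = x.1 * (T - x.1) - D).card := by
  apply Finset.card_nbij' (i := fun A => (A 0 0, A 0 1, A 1 0))
    (j := fun x => !![x.1, x.2.1; x.2.2, T - x.1])
  · intro A hA
    simp only [Finset.mem_coe, mem_filter, mem_univ, true_and, Matrix.trace_fin_two, Matrix.det_fin_two] at hA ⊢
    obtain ⟨h1, h2⟩ := hA
    linear_combination -h2 + A 0 0 * h1
  · intro x hx
    simp only [Finset.mem_coe, mem_filter, mem_univ, true_and] at hx ⊢
    constructor
    · rw [Matrix.trace_fin_two_of]; ring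
    · rw [Matrix.det_fin_two_of]; linear_combination -hx
  · intro A hA
    simp only [Finset.mem_coe, mem_filter, mem_univ, true_and, Matrix.trace_fin_two] at hA
    ext i j
    fin_cases i <;> fin_cases j <;>
      simp only [Matrix.cons_val', Matrix.cons_val_zero, Matrix.cons_val_one, Matrix.head_cons,
        Matrix.empty_val', Matrix.cons_val_fin_one, Matrix.head_fin_const, Matrix.of_apply,
        Fin.isValue] <;> [rfl; rfl; rfl; skip]
    show T - A 0 0 = A 1 1
    linear_combination -hA.1
  · intro x hx
    simp

lemma fiber_ge (T D : K) :
    Fintype.card K * Fintype.card K ≤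
      (univ.filter fun A : Matrix (Fin 2) (Fin 2) K =>
        Matrix.trace A = T ∧ A.det = D).card + Fintype.card K := by
  rw [fiber_eq_V]
  set q := Fintype.card K
  have hsum : (univ.filter fun x : K × K × K => x.2.1 * x.2.2 = x.1 * (T - x.1) - D).card
      = ∑ a : K, ((univ.filter fun x : K × K × K =>
          x.2.1 * x.2.2 = x.1 * (T - x.1) - D).filter fun x => x.1 = a).card := by
    exact Finset.card_eq_sum_card_fiberwise (f := fun x : K × K × K => x.1) (t := univ)
      (fun x _ => mem_univ _)
  have hinner : ∀ a : K, ((univ.filter fun x : K × K × K =>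
        x.2.1 * x.2.2 = x.1 * (T - x.1) - D).filter fun x => x.1 = a).card
      = (univ.filter fun bc : K × K => bc.1 * bc.2 = a * (T - a) - D).card := by
    intro a
    apply Finset.card_nbij' (i := fun x => x.2) (j := fun bc => (a, bc))
    · intro x hx
      simp only [Finset.mem_coe, mem_filter, mem_univ, true_and] at hx ⊢
      rw [← hx.2]; exact hx.1
    · intro bc hbc
      simp only [Finset.mem_coe, mem_filter, mem_univ, true_and] at hbc ⊢
      simpa using hbc
    · intro x hx
      simp only [Finset.mem_coe, mem_filter, mem_univ, true_and] at hx
      rw [← hx.2]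
    · intro bc _
      rfl
  rw [hsum]
  calc q * q = ∑ _a : K, q := by rw [Finset.sum_const, Finset.card_univ, smul_eq_mul]
    _ ≤ ∑ a : K, (((univ.filter fun x : K × K × K =>
          x.2.1 * x.2.2 = x.1 * (T - x.1) - D).filter fun x => x.1 = a).card + 1) := by
        apply Finset.sum_le_sum
        intro a _
        rw [hinner a]
        exact hyper_card_ge _
    _ = _ := by rw [Finset.sum_add_distrib, Finset.sum_const, Finset.card_univ, smul_eq_mul,
        mul_one]

lemma fiber_le (T D : K) :
    (univ.filter fun A : Matrix (Fin 2) (Fin 2) K =>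
        Matrix.trace A = T ∧ A.det = D).card ≤
      Fintype.card K * Fintype.card K + 4 * Fintype.card K := by
  rw [fiber_eq_V]
  set q := Fintype.card K with hq
  have hsum : (univ.filter fun x : K × K × K => x.2.1 * x.2.2 = x.1 * (T - x.1) - D).card
      = ∑ a : K, ((univ.filter fun x : K × K × K =>
          x.2.1 * x.2.2 = x.1 * (T - x.1) - D).filter fun x => x.1 = a).card := by
    exact Finset.card_eq_sum_card_fiberwise (f := fun x : K × K × K => x.1) (t := univ)
      (fun x _ => mem_univ _)
  have hinner : ∀ a : K, ((univ.filter fun x : K × K × K =>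
        x.2.1 * x.2.2 = x.1 * (T - x.1) - D).filter fun x => x.1 = a).card
      = (univ.filter fun bc : K × K => bc.1 * bc.2 = a * (T - a) - D).card := by
    intro a
    apply Finset.card_nbij' (i := fun x => x.2) (j := fun bc => (a, bc))
    · intro x hx
      simp only [Finset.mem_coe, mem_filter, mem_univ, true_and] at hx ⊢
      rw [← hx.2]; exact hx.1
    · intro bc hbc
      simp only [Finset.mem_coe, mem_filter, mem_univ, true_and] at hbc ⊢
      simpa using hbc
    · intro x hx
      simp only [Finset.mem_coe, mem_filter, mem_univ, true_and] at hx
      rw [← hx.2]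
    · intro bc _
      rfl
  rw [hsum]
  simp_rw [hinner]
  rw [← Finset.sum_filter_add_sum_filter_not univ (fun a : K => a * (T - a) - D = 0)]
  have h1 : ∑ a ∈ univ.filter (fun a : K => a * (T - a) - D = 0),
      (univ.filter fun bc : K × K => bc.1 * bc.2 = a * (T - a) - D).card ≤ 2 * (2 * q) := by
    calc _ ≤ (univ.filter (fun a : K => a * (T - a) - D = 0)).card * (2 * q) := by
          apply Finset.sum_le_card_nsmul
          intro a _; exact hyper_card_le _
      _ ≤ 2 * (2 * q) := Nat.mul_le_mul_right _ (root_bound T D)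
  have h2 : ∑ a ∈ univ.filter (fun a : K => ¬ a * (T - a) - D = 0),
      (univ.filter fun bc : K × K => bc.1 * bc.2 = a * (T - a) - D).card ≤ q * q := by
    calc _ ≤ (univ.filter (fun a : K => ¬ a * (T - a) - D = 0)).card * q := by
          apply Finset.sum_le_card_nsmul
          intro a ha
          simp only [mem_filter, mem_univ, true_and] at ha
          have := hyper_card_eq (K := K) ha
          omega
      _ ≤ q * q := by
          apply Nat.mul_le_mul_right
          exact (Finset.card_filter_le _ _).trans (by rw [Finset.card_univ])
  omega

lemma sq_card (h2 : (2:K) ≠ 0) :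
    2 * (univ.filter fun x : K => x ≠ 0 ∧ IsSquare x).card + 1 = Fintype.card K := by
  have himg : (univ.filter fun x : K => x ≠ 0).image (fun x => x * x)
      = univ.filter fun x : K => x ≠ 0 ∧ IsSquare x := by
    ext y
    simp only [Finset.mem_image, mem_filter, mem_univ, true_and]
    constructor
    · rintro ⟨x, hx, rfl⟩
      exact ⟨mul_ne_zero hx hx, ⟨x, rfl⟩⟩
    · rintro ⟨hy, r, rfl⟩
      exact ⟨r, fun h => hy (by rw [h, mul_zero]), rfl⟩
  have hcard := Finset.card_eq_sum_card_image (fun x : K => x * x)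
    (univ.filter fun x : K => x ≠ 0)
  rw [himg] at hcard
  have hfib : ∀ b ∈ (univ.filter fun x : K => x ≠ 0 ∧ IsSquare x),
      ((univ.filter fun x : K => x ≠ 0).filter fun a => a * a = b).card = 2 := by
    intro b hb
    simp only [mem_filter, mem_univ, true_and] at hb
    obtain ⟨hb0, r, rfl⟩ := hb
    have hr0 : r ≠ 0 := fun h => hb0 (by rw [h, mul_zero])
    have hset : ((univ.filter fun x : K => x ≠ 0).filter fun a => a * a = r * r)
        = {r, -r} := by
      ext a
      simp only [Finset.filter_filter, mem_filter, mem_univ, true_and,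
        Finset.mem_insert, Finset.mem_singleton]
      constructor
      · rintro ⟨ha0, ha⟩
        have : (a - r) * (a + r) = 0 := by linear_combination ha
        rcases mul_eq_zero.mp this with h | h
        · left; linear_combination h
        · right; linear_combination h
      · rintro (rfl | rfl)
        · exact ⟨hr0, rfl⟩
        · exact ⟨neg_ne_zero.mpr hr0, by ring⟩
    rw [hset]
    rw [Finset.card_insert_of_notMem, Finset.card_singleton]
    simp only [Finset.mem_singleton]
    intro h
    apply hr0
    have : (2:K) * r = 0 := by linear_combination h
    rcases mul_eq_zero.mp this with h' | h'
    · exact absurd h' h2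
    · exact h'
  rw [Finset.sum_congr rfl hfib, Finset.sum_const, smul_eq_mul, mul_comm] at hcard
  rw [← hcard]
  exact nz_card

lemma ns_card (h2 : (2:K) ≠ 0) :
    2 * (univ.filter fun x : K => x ≠ 0 ∧ ¬ IsSquare x).card + 1 = Fintype.card K := by
  have hsplit := Finset.card_filter_add_card_filter_not
    (s := (univ.filter fun x : K => x ≠ 0)) (p := fun x : K => IsSquare x)
  rw [Finset.filter_filter, Finset.filter_filter] at hsplit
  have h1 := sq_card (K := K) h2
  have h2' := nz_card (K := K)
  have e1 : (univ.filter fun x : K => x ≠ 0 ∧ IsSquare x)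
      = (univ.filter fun a : K => a ≠ 0 ∧ IsSquare a) := rfl
  have e2 : (univ.filter fun a : K => a ≠ 0 ∧ ¬ IsSquare a)
      = (univ.filter fun x : K => x ≠ 0 ∧ ¬ IsSquare x) := rfl
  rw [e2] at hsplit
  omega

lemma offdiag_card (s : Finset K) :
    ((s ×ˢ s).filter fun z => z.1 ≠ z.2).card + s.card = s.card * s.card := by
  have hsplit := Finset.card_filter_add_card_filter_not
    (s := s ×ˢ s) (p := fun z : K × K => z.1 ≠ z.2)
  rw [Finset.card_product] at hsplit
  have hdiag : ((s ×ˢ s).filter fun z : K × K => ¬ z.1 ≠ z.2).card = s.card := by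
    apply Finset.card_nbij' (i := fun z => z.1) (j := fun x => (x, x))
    · intro z hz
      simp only [Finset.mem_coe, mem_filter, Finset.mem_product, not_not] at hz
      exact hz.1.1
    · intro x hx
      simp only [Finset.mem_coe, mem_filter, Finset.mem_product, not_not]
      exact ⟨⟨hx, hx⟩, trivial⟩
    · intro z hz
      simp only [Finset.mem_coe, mem_filter, Finset.mem_product, not_not] at hz
      exact Prod.ext rfl hz.2
    · intro x _; rfl
  omega

lemma P_split :
    (univ.filter fun z : K×K => z.1 ≠ 0 ∧ z.2 ≠ 0 ∧ z.1 ≠ z.2 ∧ (IsSquare z.1 ∨ IsSquare z.2)).card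
    + (univ.filter fun z : K×K => z.1 ≠ 0 ∧ z.2 ≠ 0 ∧ z.1 ≠ z.2 ∧ ¬IsSquare z.1 ∧ ¬IsSquare z.2).card
    = (univ.filter fun z : K×K => z.1 ≠ 0 ∧ z.2 ≠ 0 ∧ z.1 ≠ z.2).card := by
  have h := Finset.card_filter_add_card_filter_not
    (s := univ.filter fun z : K×K => z.1 ≠ 0 ∧ z.2 ≠ 0 ∧ z.1 ≠ z.2)
    (p := fun z : K×K => IsSquare z.1 ∨ IsSquare z.2)
  rw [Finset.filter_filter, Finset.filter_filter] at h
  rw [← h]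
  congr 1
  · congr 1; ext z; simp only [mem_filter, mem_univ, true_and]; tauto
  · congr 1; ext z; simp only [mem_filter, mem_univ, true_and]
    constructor
    · rintro ⟨h1, h2, h3, h4, h5⟩; exact ⟨⟨h1, h2, h3⟩, by tauto⟩
    · rintro ⟨⟨h1, h2, h3⟩, h4⟩; push_neg at h4; tauto

lemma W_card :
    (univ.filter fun z : K×K => z.1 ≠ 0 ∧ z.2 ≠ 0 ∧ z.1 ≠ z.2).card
      + (univ.filter fun x : K => x ≠ 0).card
    = (univ.filter fun x : K => x ≠ 0).card * (univ.filter fun x : K => x ≠ 0).card := by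
  have hset : (univ.filter fun z : K×K => z.1 ≠ 0 ∧ z.2 ≠ 0 ∧ z.1 ≠ z.2)
      = (((univ.filter fun x : K => x ≠ 0) ×ˢ (univ.filter fun x : K => x ≠ 0)).filter
          fun z => z.1 ≠ z.2) := by
    ext z
    simp only [mem_filter, mem_univ, true_and, Finset.mem_product]
    tauto
  rw [hset]
  exact offdiag_card _

lemma P'_card :
    (univ.filter fun z : K×K => z.1 ≠ 0 ∧ z.2 ≠ 0 ∧ z.1 ≠ z.2 ∧ ¬IsSquare z.1 ∧ ¬IsSquare z.2).card
      + (univ.filter fun x : K => x ≠ 0 ∧ ¬IsSquare x).card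
    = (univ.filter fun x : K => x ≠ 0 ∧ ¬IsSquare x).card
      * (univ.filter fun x : K => x ≠ 0 ∧ ¬IsSquare x).card := by
  have hset : (univ.filter fun z : K×K =>
        z.1 ≠ 0 ∧ z.2 ≠ 0 ∧ z.1 ≠ z.2 ∧ ¬IsSquare z.1 ∧ ¬IsSquare z.2)
      = (((univ.filter fun x : K => x ≠ 0 ∧ ¬IsSquare x) ×ˢ
          (univ.filter fun x : K => x ≠ 0 ∧ ¬IsSquare x)).filter fun z => z.1 ≠ z.2) := by
    ext z
    simp only [mem_filter, mem_univ, true_and, Finset.mem_product]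
    tauto
  rw [hset]
  exact offdiag_card _

lemma two_to_one (h2 : (2:K) ≠ 0) :
    (univ.filter fun z : K×K =>
        z.1 ≠ 0 ∧ z.2 ≠ 0 ∧ z.1 ≠ z.2 ∧ (IsSquare z.1 ∨ IsSquare z.2)).card
    = 2 * (univ.filter fun g : K×K => g.2 ≠ 0 ∧ g.1^2 - 4*g.2 ≠ 0 ∧
        ∃ s : K, s^2 = g.2 ∧ ((g.1 + 2*s ≠ 0 ∧ IsSquare (g.1 + 2*s)) ∨
          (g.1 - 2*s ≠ 0 ∧ IsSquare (g.1 - 2*s)))).card := by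
  have h4 : (4:K) ≠ 0 := by
    have : (4:K) = 2*2 := by norm_num
    rw [this]; exact mul_ne_zero h2 h2
  set φ : K×K → K×K := fun z => ((z.1 + z.2) * (2:K)⁻¹, ((z.1 - z.2) * (4:K)⁻¹)^2) with hφdef
  have hmaps : ∀ z ∈ (univ.filter fun z : K×K =>
      z.1 ≠ 0 ∧ z.2 ≠ 0 ∧ z.1 ≠ z.2 ∧ (IsSquare z.1 ∨ IsSquare z.2)),
      φ z ∈ (univ.filter fun g : K×K => g.2 ≠ 0 ∧ g.1^2 - 4*g.2 ≠ 0 ∧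
        ∃ s : K, s^2 = g.2 ∧ ((g.1 + 2*s ≠ 0 ∧ IsSquare (g.1 + 2*s)) ∨
          (g.1 - 2*s ≠ 0 ∧ IsSquare (g.1 - 2*s)))) := by
    rintro ⟨x, y⟩ hz
    simp only [mem_filter, mem_univ, true_and] at hz ⊢
    obtain ⟨hx0, hy0, hxy, hsq⟩ := hz
    have hs0 : (x - y) * (4:K)⁻¹ ≠ 0 :=
      mul_ne_zero (sub_ne_zero.mpr hxy) (inv_ne_zero h4)
    have hTps : (x + y) * (2:K)⁻¹ + 2*((x - y) * (4:K)⁻¹) = x := by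
      field_simp; ring
    have hTms : (x + y) * (2:K)⁻¹ - 2*((x - y) * (4:K)⁻¹) = y := by
      field_simp; ring
    refine ⟨pow_ne_zero _ hs0, ?_, (x - y) * (4:K)⁻¹, rfl, ?_⟩
    · have key : ((x + y) * (2:K)⁻¹)^2 - 4*(((x - y) * (4:K)⁻¹)^2) = x*y := by
        field_simp; ring
      rw [key]
      exact mul_ne_zero hx0 hy0
    · rw [hTps, hTms]
      rcases hsq with h | h
      · exact Or.inl ⟨hx0, h⟩
      · exact Or.inr ⟨hy0, h⟩
  rw [Finset.card_eq_sum_card_fiberwise hmaps]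
  have hfib : ∀ g ∈ (univ.filter fun g : K×K => g.2 ≠ 0 ∧ g.1^2 - 4*g.2 ≠ 0 ∧
      ∃ s : K, s^2 = g.2 ∧ ((g.1 + 2*s ≠ 0 ∧ IsSquare (g.1 + 2*s)) ∨
        (g.1 - 2*s ≠ 0 ∧ IsSquare (g.1 - 2*s)))),
      ((univ.filter fun z : K×K =>
        z.1 ≠ 0 ∧ z.2 ≠ 0 ∧ z.1 ≠ z.2 ∧ (IsSquare z.1 ∨ IsSquare z.2)).filter
          fun z => φ z = g).card = 2 := by
    intro g hg
    simp only [mem_filter, mem_univ, true_and] at hg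
    obtain ⟨hD, hΔ, s, hs, hcond⟩ := hg
    have hs0 : s ≠ 0 := by intro h; apply hD; rw [← hs, h]; ring
    set x := g.1 + 2*s with hxdef
    set y := g.1 - 2*s with hydef
    have hxy : x * y = g.1^2 - 4*g.2 := by rw [← hs]; ring
    have hx0 : x ≠ 0 := by intro h; apply hΔ; rw [← hxy, h, zero_mul]
    have hy0 : y ≠ 0 := by intro h; apply hΔ; rw [← hxy, h, mul_zero]
    have hxney : x ≠ y := by
      intro h
      have h4s : (4:K) * s = x - y := by rw [hxdef, hydef]; ring
      rw [h, sub_self] at h4s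
      exact hs0 ((mul_eq_zero.mp h4s).resolve_left h4)
    have hset : ((univ.filter fun z : K×K =>
        z.1 ≠ 0 ∧ z.2 ≠ 0 ∧ z.1 ≠ z.2 ∧ (IsSquare z.1 ∨ IsSquare z.2)).filter
          fun z => φ z = g) = {(x, y), (y, x)} := by
      ext z
      simp only [mem_filter, mem_univ, true_and, Finset.mem_insert, Finset.mem_singleton]
      constructor
      · rintro ⟨⟨hz1, hz2, hz3, hzsq⟩, hφz⟩
        rw [hφdef, Prod.ext_iff] at hφz
        obtain ⟨e1, e2⟩ := hφz
        simp only at e1 e2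
        have E1 : z.1 + z.2 = 2 * g.1 := by
          have := mul_inv_cancel₀ h2
          linear_combination 2 * e1 - (z.1 + z.2) * this
        have E2 : (z.1 - z.2)^2 = 16 * s^2 := by
          have h16 := mul_inv_cancel₀ h4
          rw [← hs] at e2
          linear_combination 16 * e2 - (z.1-z.2)^2 * (4*(4:K)⁻¹ + 1) * h16
        have : ((z.1 - z.2) - 4*s) * ((z.1 - z.2) + 4*s) = 0 := by linear_combination E2
        rcases mul_eq_zero.mp this with hc | hc
        · left
          have hz1x : z.1 = x := by
            apply mul_left_cancel₀ h2
            rw [hxdef]; linear_combination E1 + hc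
          have hz2y : z.2 = y := by
            apply mul_left_cancel₀ h2
            rw [hydef]; linear_combination E1 - hc
          exact Prod.ext hz1x hz2y
        · right
          have hz1y : z.1 = y := by
            apply mul_left_cancel₀ h2
            rw [hydef]; linear_combination E1 + hc
          have hz2x : z.2 = x := by
            apply mul_left_cancel₀ h2
            rw [hxdef]; linear_combination E1 - hc
          exact Prod.ext hz1y hz2x
      · rintro (rfl | rfl)
        · refine ⟨⟨hx0, hy0, hxney, ?_⟩, ?_⟩
          · rcases hcond with h | h
            · exact Or.inl h.2
            · exact Or.inr h.2
          · rw [hφdef, Prod.ext_iff]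
            constructor
            · show (x + y) * (2:K)⁻¹ = g.1
              have hxy2 : x + y = g.1 * 2 := by rw [hxdef, hydef]; ring
              rw [hxy2, mul_inv_cancel_right₀ h2]
            · show ((x - y) * (4:K)⁻¹)^2 = g.2
              have hxy4 : x - y = s * 4 := by rw [hxdef, hydef]; ring
              rw [hxy4, mul_inv_cancel_right₀ h4, hs]
        · refine ⟨⟨hy0, hx0, fun h => hxney h.symm, ?_⟩, ?_⟩
          · rcases hcond with h | h
            · exact Or.inr h.2
            · exact Or.inl h.2
          · rw [hφdef, Prod.ext_iff]
            constructor
            · show (y + x) * (2:K)⁻¹ = g.1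
              have hxy2 : y + x = g.1 * 2 := by rw [hxdef, hydef]; ring
              rw [hxy2, mul_inv_cancel_right₀ h2]
            · show ((y - x) * (4:K)⁻¹)^2 = g.2
              have hxy4 : y - x = (-s) * 4 := by rw [hxdef, hydef]; ring
              rw [hxy4, mul_inv_cancel_right₀ h4, neg_sq, hs]
    rw [hset]
    rw [Finset.card_insert_of_notMem, Finset.card_singleton]
    simp only [Finset.mem_singleton, Prod.ext_iff, not_and]
    intro h
    exact absurd h hxney
  rw [Finset.sum_congr rfl hfib, Finset.sum_const, smul_eq_mul, mul_comm]

lemma bad_le (h2 : (2:K) ≠ 0) :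
    (univ.filter fun A : Matrix (Fin 2) (Fin 2) K =>
        A.det = 0 ∨ (Matrix.trace A)^2 - 4*A.det = 0).card
      ≤ 3 * (Fintype.card K * Fintype.card K * Fintype.card K)
        + Fintype.card K * Fintype.card K := by
  have h4 : (4:K) ≠ 0 := by
    have : (4:K) = 2*2 := by norm_num
    rw [this]; exact mul_ne_zero h2 h2
  set q := Fintype.card K
  have hcube : Fintype.card (K × K × K) = q * q * q := by
    simp [Fintype.card_prod, q]; ring
  have hsq : Fintype.card (K × K) = q * q := by simp [Fintype.card_prod, q]
  have hsub : (univ.filter fun A : Matrix (Fin 2) (Fin 2) K =>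
      A.det = 0 ∨ (Matrix.trace A)^2 - 4*A.det = 0)
      ⊆ (univ.filter fun A : Matrix (Fin 2) (Fin 2) K => A.det = 0 ∧ A 0 0 = 0)
      ∪ (univ.filter fun A : Matrix (Fin 2) (Fin 2) K => A.det = 0 ∧ A 0 0 ≠ 0)
      ∪ (univ.filter fun A : Matrix (Fin 2) (Fin 2) K =>
          (Matrix.trace A)^2 - 4*A.det = 0 ∧ A 0 1 = 0)
      ∪ (univ.filter fun A : Matrix (Fin 2) (Fin 2) K =>
          (Matrix.trace A)^2 - 4*A.det = 0 ∧ A 0 1 ≠ 0) := by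
    intro A hA
    simp only [mem_filter, mem_univ, true_and, Finset.mem_union] at hA ⊢
    rcases hA with h | h
    · rcases eq_or_ne (A 0 0) 0 with h0 | h0
      · exact Or.inl (Or.inl (Or.inl ⟨h, h0⟩))
      · exact Or.inl (Or.inl (Or.inr ⟨h, h0⟩))
    · rcases eq_or_ne (A 0 1) 0 with h0 | h0
      · exact Or.inl (Or.inr ⟨h, h0⟩)
      · exact Or.inr ⟨h, h0⟩
  have c1 : (univ.filter fun A : Matrix (Fin 2) (Fin 2) K =>
      A.det = 0 ∧ A 0 0 = 0).card ≤ q * q * q := by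
    rw [← hcube, ← Finset.card_univ]
    apply Finset.card_le_card_of_injOn (fun A => (A 0 1, A 1 0, A 1 1)) (fun _ _ => mem_univ _)
    intro A hA B hB h
    simp only [Finset.coe_filter, Set.mem_setOf_eq, mem_univ, true_and] at hA hB
    simp only [Prod.ext_iff] at h
    ext i j
    fin_cases i <;> fin_cases j
    · exact hA.2.trans hB.2.symm
    · exact h.1
    · exact h.2.1
    · exact h.2.2
  have c2 : (univ.filter fun A : Matrix (Fin 2) (Fin 2) K =>
      A.det = 0 ∧ A 0 0 ≠ 0).card ≤ q * q * q := by
    rw [← hcube, ← Finset.card_univ]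
    apply Finset.card_le_card_of_injOn (fun A => (A 0 0, A 0 1, A 1 0)) (fun _ _ => mem_univ _)
    intro A hA B hB h
    simp only [Finset.coe_filter, Set.mem_setOf_eq, mem_univ, true_and] at hA hB
    simp only [Prod.ext_iff] at h
    obtain ⟨e1, e2, e3⟩ := h
    have hdA := hA.1; have hdB := hB.1
    rw [Matrix.det_fin_two] at hdA hdB
    have h11 : A 1 1 = B 1 1 := by
      apply mul_left_cancel₀ hA.2
      linear_combination hdA - hdB + A 1 0 * e2 + B 0 1 * e3 - B 1 1 * e1
    ext i j
    fin_cases i <;> fin_cases j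
    · exact e1
    · exact e2
    · exact e3
    · exact h11
  have c3 : (univ.filter fun A : Matrix (Fin 2) (Fin 2) K =>
      (Matrix.trace A)^2 - 4*A.det = 0 ∧ A 0 1 = 0).card ≤ q * q := by
    rw [← hsq, ← Finset.card_univ]
    apply Finset.card_le_card_of_injOn (fun A => (A 0 0, A 1 0)) (fun _ _ => mem_univ _)
    intro A hA B hB h
    simp only [Finset.coe_filter, Set.mem_setOf_eq, mem_univ, true_and] at hA hB
    simp only [Prod.ext_iff] at h
    have key : ∀ C : Matrix (Fin 2) (Fin 2) K,
        (Matrix.trace C)^2 - 4*C.det = 0 → C 0 1 = 0 → C 1 1 = C 0 0 := by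
      intro C hC hC01
      rw [Matrix.trace_fin_two, Matrix.det_fin_two, hC01] at hC
      have : (C 0 0 - C 1 1)^2 = 0 := by linear_combination hC
      have := pow_eq_zero_iff (n := 2) (by norm_num) |>.mp this
      linear_combination -this
    ext i j
    fin_cases i <;> fin_cases j
    · exact h.1
    · exact hA.2.trans hB.2.symm
    · exact h.2
    · exact (key A hA.1 hA.2).trans (h.1.trans (key B hB.1 hB.2).symm)
  have c4 : (univ.filter fun A : Matrix (Fin 2) (Fin 2) K =>
      (Matrix.trace A)^2 - 4*A.det = 0 ∧ A 0 1 ≠ 0).card ≤ q * q * q := by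
    rw [← hcube, ← Finset.card_univ]
    apply Finset.card_le_card_of_injOn (fun A => (A 0 0, A 0 1, A 1 1)) (fun _ _ => mem_univ _)
    intro A hA B hB h
    simp only [Finset.coe_filter, Set.mem_setOf_eq, mem_univ, true_and] at hA hB
    simp only [Prod.ext_iff] at h
    obtain ⟨e1, e2, e3⟩ := h
    have hdA := hA.1; have hdB := hB.1
    rw [Matrix.trace_fin_two, Matrix.det_fin_two] at hdA hdB
    have h10 : A 1 0 = B 1 0 := by
      have h4b : (4:K) * A 0 1 ≠ 0 := mul_ne_zero h4 hA.2
      apply mul_left_cancel₀ h4b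
      linear_combination hdA - hdB - 4 * B 1 0 * e2
        - (A 0 0 + A 1 1 + B 0 0 + B 1 1) * e1 - (A 0 0 + A 1 1 + B 0 0 + B 1 1) * e3
        + 4 * A 0 0 * e3 + 4 * B 1 1 * e1
    ext i j
    fin_cases i <;> fin_cases j
    · exact e1
    · exact e2
    · exact h10
    · exact e3
  refine (Finset.card_le_card hsub).trans ?_
  refine ((Finset.card_union_le _ _).trans (Nat.add_le_add_right
    ((Finset.card_union_le _ _).trans (Nat.add_le_add_right (Finset.card_union_le _ _) _)) _)).trans ?_
  linarith [c1, c2, c3, c4]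

lemma SG_sum (t : Finset (K × K)) [DecidablePred (· ∈ t)] :
    (univ.filter fun A : Matrix (Fin 2) (Fin 2) K => (Matrix.trace A, A.det) ∈ t).card
      = ∑ g ∈ t, (univ.filter fun A : Matrix (Fin 2) (Fin 2) K =>
          Matrix.trace A = g.1 ∧ A.det = g.2).card := by
  rw [Finset.card_eq_sum_card_fiberwise
    (s := univ.filter fun A : Matrix (Fin 2) (Fin 2) K => (Matrix.trace A, A.det) ∈ t)
    (f := fun A : Matrix (Fin 2) (Fin 2) K => (Matrix.trace A, A.det)) (t := t)
    (fun A hA => Finset.mem_coe.mpr (mem_filter.mp hA).2)]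
  apply Finset.sum_congr rfl
  intro g hg
  congr 1
  ext A
  simp only [Finset.filter_filter, mem_filter, mem_univ, true_and, Prod.ext_iff]
  constructor
  · rintro ⟨_, h1, h2⟩; exact ⟨h1, h2⟩
  · rintro ⟨h1, h2⟩
    refine ⟨?_, h1, h2⟩
    rw [h1, h2]
    simpa using hg

lemma SG_ge (t : Finset (K × K)) [DecidablePred (· ∈ t)] :
    t.card * (Fintype.card K * Fintype.card K) ≤
      (univ.filter fun A : Matrix (Fin 2) (Fin 2) K =>
        (Matrix.trace A, A.det) ∈ t).card + t.card * Fintype.card K := by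
  rw [SG_sum]
  calc t.card * (Fintype.card K * Fintype.card K)
      = ∑ _g ∈ t, Fintype.card K * Fintype.card K := by rw [Finset.sum_const, smul_eq_mul]
    _ ≤ ∑ g ∈ t, ((univ.filter fun A : Matrix (Fin 2) (Fin 2) K =>
          Matrix.trace A = g.1 ∧ A.det = g.2).card + Fintype.card K) :=
        Finset.sum_le_sum (fun g _ => fiber_ge g.1 g.2)
    _ = _ := by rw [Finset.sum_add_distrib, Finset.sum_const, smul_eq_mul]

lemma SG_le (t : Finset (K × K)) [DecidablePred (· ∈ t)] :
    (univ.filter fun A : Matrix (Fin 2) (Fin 2) K =>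
        (Matrix.trace A, A.det) ∈ t).card
      ≤ t.card * (Fintype.card K * Fintype.card K + 4 * Fintype.card K) := by
  rw [SG_sum]
  calc _ ≤ ∑ _g ∈ t, (Fintype.card K * Fintype.card K + 4 * Fintype.card K) :=
        Finset.sum_le_sum (fun g _ => fiber_le g.1 g.2)
    _ = _ := by rw [Finset.sum_const, smul_eq_mul, mul_comm]

end Aux
theorem stmt_7 :
    ∃ C : ℝ, ∀ p : ℕ, p.Prime → Odd p →
      |(({A : Matrix (Fin 2) (Fin 2) (ZMod p) |
            ∃ B : Matrix (Fin 2) (Fin 2) (ZMod p), B * B = A}.ncard : ℝ)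
          - (3 / 8) * (p : ℝ) ^ 4)| ≤ C * (p : ℝ) ^ 3 := by
  use 100
  intro p hp hodd
  haveI : Fact p.Prime := ⟨hp⟩
  haveI : DecidablePred (IsSquare : ZMod p → Prop) :=
    fun a => inferInstanceAs (Decidable (∃ r : ZMod p, a = r * r))
  have hp2 : p ≠ 2 := by rintro rfl; have := Nat.odd_iff.mp hodd; norm_num at this
  have h2 : (2 : ZMod p) ≠ 0 := by
    intro h
    have h' : ((2 : ℕ) : ZMod p) = 0 := by exact_mod_cast h
    rw [ZMod.natCast_eq_zero_iff] at h'
    exact hp2 ((Nat.prime_dvd_prime_iff_eq hp Nat.prime_two).mp h')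
  have hp3 : 3 ≤ p := by have := hp.two_le; omega
  set G : Finset (ZMod p × ZMod p) := univ.filter fun g => g.2 ≠ 0 ∧ g.1^2 - 4*g.2 ≠ 0 ∧
      ∃ s : ZMod p, s^2 = g.2 ∧ ((g.1 + 2*s ≠ 0 ∧ IsSquare (g.1 + 2*s)) ∨
        (g.1 - 2*s ≠ 0 ∧ IsSquare (g.1 - 2*s))) with hGdef
  set SG : Finset (Matrix (Fin 2) (Fin 2) (ZMod p)) :=
    univ.filter fun A => (Matrix.trace A, A.det) ∈ G with hSGdef
  set Sfin : Finset (Matrix (Fin 2) (Fin 2) (ZMod p)) :=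
    univ.filter fun A => ∃ B, B * B = A with hSfindef
  set bad : Finset (Matrix (Fin 2) (Fin 2) (ZMod p)) :=
    univ.filter fun A => A.det = 0 ∨ (Matrix.trace A)^2 - 4*A.det = 0 with hbaddef
  -- inclusions
  have hA3 : SG.card ≤ Sfin.card := by
    apply Finset.card_le_card
    intro A hA
    rw [hSGdef, mem_filter] at hA
    rw [hGdef, mem_filter] at hA
    obtain ⟨_, _, hD, hΔ, s, hs, hcond⟩ := hA
    rw [hSfindef, mem_filter]
    exact ⟨mem_univ _, (sq_iff h2 A hΔ).mpr ⟨s, hs, hcond⟩⟩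
  have hA4 : Sfin.card ≤ SG.card + bad.card := by
    refine (Finset.card_le_card ?_).trans (Finset.card_union_le _ _)
    intro A hA
    rw [hSfindef, mem_filter] at hA
    rw [Finset.mem_union]
    by_cases hb : A.det = 0 ∨ (Matrix.trace A)^2 - 4*A.det = 0
    · right; rw [hbaddef, mem_filter]; exact ⟨mem_univ _, hb⟩
    · push_neg at hb
      left
      rw [hSGdef, mem_filter, hGdef, mem_filter]
      exact ⟨mem_univ _, mem_univ _, hb.1, hb.2, (sq_iff h2 A hb.2).mp hA.2⟩
  -- counting facts
  have hq : Fintype.card (ZMod p) = p := ZMod.card p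
  have hA1 := SG_ge (K := ZMod p) G
  have hA2 := SG_le (K := ZMod p) G
  have hA5 := bad_le (K := ZMod p) h2
  have hA6 := two_to_one (K := ZMod p) h2
  have hA7 := P_split (K := ZMod p)
  have hA8 := W_card (K := ZMod p)
  have hA9 := P'_card (K := ZMod p)
  have hA10 := nz_card (K := ZMod p)
  have hA11 := ns_card (K := ZMod p) h2
  rw [hq] at hA1 hA2 hA5 hA10 hA11
  rw [← hSGdef] at hA1 hA2
  rw [← hbaddef] at hA5
  rw [← hGdef] at hA6
  have hGle : G.card ≤ p * p := by
    calc G.card ≤ Fintype.card (ZMod p × ZMod p) := by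
          rw [← Finset.card_univ]; exact Finset.card_filter_le _ _
      _ = p * p := by rw [Fintype.card_prod, hq]
  -- ncard
  have hncard : ({A : Matrix (Fin 2) (Fin 2) (ZMod p) |
      ∃ B : Matrix (Fin 2) (Fin 2) (ZMod p), B * B = A}.ncard) = Sfin.card := by
    rw [hSfindef, Set.ncard_eq_toFinset_card', Set.toFinset_setOf]
  rw [hncard]
  -- cast to ℝ
  have c1 : ((G.card : ℝ)) * (p*p) ≤ (SG.card : ℝ) + (G.card : ℝ) * p := by exact_mod_cast hA1
  have c2 : (SG.card : ℝ) ≤ (G.card : ℝ) * (p*p + 4*p) := by exact_mod_cast hA2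
  have c3 : (SG.card : ℝ) ≤ (Sfin.card : ℝ) := by exact_mod_cast hA3
  have c4 : (Sfin.card : ℝ) ≤ (SG.card : ℝ) + (bad.card : ℝ) := by exact_mod_cast hA4
  have c5 : (bad.card : ℝ) ≤ 3*((p:ℝ)*p*p) + (p:ℝ)*p := by exact_mod_cast hA5
  have c6 : ((univ.filter fun z : ZMod p × ZMod p =>
      z.1 ≠ 0 ∧ z.2 ≠ 0 ∧ z.1 ≠ z.2 ∧ (IsSquare z.1 ∨ IsSquare z.2)).card : ℝ)
      = 2 * (G.card : ℝ) := by exact_mod_cast hA6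
  have c7 : ((univ.filter fun z : ZMod p × ZMod p =>
      z.1 ≠ 0 ∧ z.2 ≠ 0 ∧ z.1 ≠ z.2 ∧ (IsSquare z.1 ∨ IsSquare z.2)).card : ℝ)
      + ((univ.filter fun z : ZMod p × ZMod p =>
      z.1 ≠ 0 ∧ z.2 ≠ 0 ∧ z.1 ≠ z.2 ∧ ¬IsSquare z.1 ∧ ¬IsSquare z.2).card : ℝ)
      = ((univ.filter fun z : ZMod p × ZMod p =>
      z.1 ≠ 0 ∧ z.2 ≠ 0 ∧ z.1 ≠ z.2).card : ℝ) := by exact_mod_cast hA7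
  have c8 : ((univ.filter fun z : ZMod p × ZMod p =>
      z.1 ≠ 0 ∧ z.2 ≠ 0 ∧ z.1 ≠ z.2).card : ℝ)
      + ((univ.filter fun x : ZMod p => x ≠ 0).card : ℝ)
      = ((univ.filter fun x : ZMod p => x ≠ 0).card : ℝ)
        * ((univ.filter fun x : ZMod p => x ≠ 0).card : ℝ) := by exact_mod_cast hA8
  have c9 : ((univ.filter fun z : ZMod p × ZMod p =>
      z.1 ≠ 0 ∧ z.2 ≠ 0 ∧ z.1 ≠ z.2 ∧ ¬IsSquare z.1 ∧ ¬IsSquare z.2).card : ℝ)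
      + ((univ.filter fun x : ZMod p => x ≠ 0 ∧ ¬IsSquare x).card : ℝ)
      = ((univ.filter fun x : ZMod p => x ≠ 0 ∧ ¬IsSquare x).card : ℝ)
        * ((univ.filter fun x : ZMod p => x ≠ 0 ∧ ¬IsSquare x).card : ℝ) := by
    exact_mod_cast hA9
  have c10 : ((univ.filter fun x : ZMod p => x ≠ 0).card : ℝ) + 1 = (p : ℝ) := by
    exact_mod_cast hA10
  have c11 : 2 * ((univ.filter fun x : ZMod p => x ≠ 0 ∧ ¬IsSquare x).card : ℝ) + 1 = (p : ℝ) := by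
    exact_mod_cast hA11
  have c12 : (G.card : ℝ) ≤ (p:ℝ) * p := by exact_mod_cast hGle
  -- derive the exact count of G
  have e8g : 8 * (G.card : ℝ) = 3*(p:ℝ)^2 - 8*(p:ℝ) + 5 := by
    set zc := ((univ.filter fun x : ZMod p => x ≠ 0).card : ℝ)
    set nc := ((univ.filter fun x : ZMod p => x ≠ 0 ∧ ¬IsSquare x).card : ℝ)
    set wc := ((univ.filter fun z : ZMod p × ZMod p =>
      z.1 ≠ 0 ∧ z.2 ≠ 0 ∧ z.1 ≠ z.2).card : ℝ)
    set pc := ((univ.filter fun z : ZMod p × ZMod p =>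
      z.1 ≠ 0 ∧ z.2 ≠ 0 ∧ z.1 ≠ z.2 ∧ (IsSquare z.1 ∨ IsSquare z.2)).card : ℝ)
    set qc := ((univ.filter fun z : ZMod p × ZMod p =>
      z.1 ≠ 0 ∧ z.2 ≠ 0 ∧ z.1 ≠ z.2 ∧ ¬IsSquare z.1 ∧ ¬IsSquare z.2).card : ℝ)
    linear_combination -4*c6 + 4*c7 + 4*c8 - 4*c9 + 4*(zc + (p:ℝ) - 2)*c10
      - (2*nc + (p:ℝ) - 3)*c11
  have egc : (G.card : ℝ) = (3*(p:ℝ)^2 - 8*(p:ℝ) + 5) / 8 := by linarith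
  have k1 : (G.card : ℝ) * ((p:ℝ)*p) = (3*(p:ℝ)^2 - 8*(p:ℝ) + 5) / 8 * ((p:ℝ)*p) := by
    rw [egc]
  have k2 : (G.card : ℝ) * (p:ℝ) = (3*(p:ℝ)^2 - 8*(p:ℝ) + 5) / 8 * (p:ℝ) := by rw [egc]
  have c2' : (SG.card : ℝ) ≤ (G.card : ℝ) * ((p:ℝ)*p) + 4 * ((G.card : ℝ) * p) := by
    calc (SG.card : ℝ) ≤ (G.card : ℝ) * (p*p + 4*p) := c2
      _ = (G.card : ℝ) * ((p:ℝ)*p) + 4 * ((G.card : ℝ) * p) := by ring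
  have hpR : (3:ℝ) ≤ (p:ℝ) := by exact_mod_cast hp3
  have hple : (p:ℝ) ≤ (p:ℝ)^3 := by nlinarith
  have hp2le : (p:ℝ)^2 ≤ (p:ℝ)^3 := by nlinarith
  rw [abs_le]
  constructor
  · nlinarith [c1, c3, k1, k2, hpR, hple, hp2le]
  · nlinarith [c2', c4, c5, k1, k2, hpR, hple, hp2le]
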